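/- Let C be a step function with j pieces on [x₀, xᵢ] (breakpoints in X = {x₀,…,xₙ}, values in P) minimizing ∫ |R - C| among all such functions whose last piece has value p and starts at some x_{i'} < xᵢ. Then there exists such a minimizer C whose restriction to [x₀, x_{i'}] is an optimal (j-1)-piece compression of R restricted to [x₀, x_{i'}]. -/

import Mathlib

open MeasureTheory

/-- `f` is a step function with `k` pieces determined by the partition `t`. -/
def IsStepOn (f : ℝ → ℝ) (t : ℕ → ℝ) (k : ℕ) : Prop :=
  ∀ j < k, ∀ u ∈ Set.Ico (t j) (t (j+1)), f u = f (t j)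

/-- `(t, M)` is an admissible `j`-piece compression of the interval `[x 0, x i]`:
the breakpoints `t 0 < ⋯ < t j` lie among the points `x 0, …, x i`, start at `x 0`,
end at `x i`, `M` is a step function on this partition, and the value of each
piece belongs to the pitch set `P`. -/
def Adm (x : ℕ → ℝ) (P : Finset ℝ) (i j : ℕ) (t : ℕ → ℝ) (M : ℝ → ℝ) : Prop :=
  t 0 = x 0 ∧ t j = x i ∧ (∀ a < j, t a < t (a+1)) ∧
  (∀ a ≤ j, ∃ l ≤ i, t a = x l) ∧ IsStepOn M t j ∧ (∀ a < j, M (t a) ∈ P)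

/-- Area difference between `R` and `M` over `[x 0, x i]`. -/
noncomputable def compCost (x : ℕ → ℝ) (R M : ℝ → ℝ) (i : ℕ) : ℝ :=
  ∫ z in Set.Ico (x 0) (x i), |R z - M z|

/-- `A*[i,j]`: optimum cost of a `j`-piece compression of `[x 0, x i]`. -/
noncomputable def Astar (x : ℕ → ℝ) (P : Finset ℝ) (R : ℝ → ℝ) (i j : ℕ) : ℝ :=
  sInf {c : ℝ | ∃ t M, Adm x P i j t M ∧ c = compCost x R M i}

/-- `A_i[j,p]`: optimum cost of a `j`-piece compression of `[x 0, x i]` whose last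
piece has value `p`. -/
noncomputable def Apitch (x : ℕ → ℝ) (P : Finset ℝ) (R : ℝ → ℝ) (i j : ℕ) (p : ℝ) : ℝ :=
  sInf {c : ℝ | ∃ t M, Adm x P i j t M ∧ M (t (j-1)) = p ∧ c = compCost x R M i}

lemma chain_le (s : ℕ → ℝ) (k : ℕ) (h : ∀ a < k, s a < s (a+1)) :
    ∀ a b, a ≤ b → b ≤ k → s a ≤ s b := by
  intro a b hab hbk
  induction b with
  | zero => simp [Nat.le_zero.mp hab]
  | succ m ih =>
    rcases Nat.eq_or_lt_of_le hab with rfl | h'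
    · exact le_refl _
    · exact (ih (Nat.lt_succ_iff.mp h') ((Nat.le_succ m).trans hbk)).trans
        (h m (Nat.lt_of_lt_of_le (Nat.lt_succ_self m) hbk)).le

lemma chain_lt (s : ℕ → ℝ) (k : ℕ) (h : ∀ a < k, s a < s (a+1)) :
    ∀ a b, a < b → b ≤ k → s a < s b := by
  intro a b hab hbk
  obtain ⟨m, rfl⟩ : ∃ m, b = m + 1 := ⟨b - 1, by omega⟩
  exact lt_of_le_of_lt (chain_le s k h a m (by omega) (by omega)) (h m (by omega))

lemma intOn_pieces (f : ℝ → ℝ) (s : ℕ → ℝ) (k : ℕ)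
    (hm : ∀ a < k, s a < s (a+1))
    (hf : ∀ a < k, IntegrableOn f (Set.Ico (s a) (s (a+1)))) :
    IntegrableOn f (Set.Ico (s 0) (s k)) := by
  induction k with
  | zero => rw [Set.Ico_self]; exact integrableOn_empty
  | succ m ih =>
    have h0m : s 0 ≤ s m := chain_le s (m+1) hm 0 m (Nat.zero_le m) (Nat.le_succ m)
    have hmm : s m ≤ s (m+1) := (hm m (Nat.lt_succ_self m)).le
    have := (ih (fun a ha => hm a (ha.trans (Nat.lt_succ_self m)))
      (fun a ha => hf a (ha.trans (Nat.lt_succ_self m)))).union (hf m (Nat.lt_succ_self m))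
    exact this.mono_set (Set.Ico_union_Ico_eq_Ico h0m hmm).symm.subset

lemma split_int (f : ℝ → ℝ) {a b c : ℝ} (hab : a ≤ b) (hbc : b ≤ c)
    (hf : IntegrableOn f (Set.Ico a c)) :
    ∫ z in Set.Ico a c, f z = (∫ z in Set.Ico a b, f z) + ∫ z in Set.Ico b c, f z := by
  rw [← Set.Ico_union_Ico_eq_Ico hab hbc,
    setIntegral_union Set.Ico_disjoint_Ico_same measurableSet_Ico
      (hf.mono_set (Set.Ico_subset_Ico_right hbc))
      (hf.mono_set (Set.Ico_subset_Ico_left hab))]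

lemma sum_pieces (f : ℝ → ℝ) (s : ℕ → ℝ) (k : ℕ)
    (hm : ∀ a < k, s a < s (a+1))
    (hf : ∀ a < k, IntegrableOn f (Set.Ico (s a) (s (a+1)))) :
    ∫ z in Set.Ico (s 0) (s k), f z
      = ∑ a ∈ Finset.range k, ∫ z in Set.Ico (s a) (s (a+1)), f z := by
  induction k with
  | zero => simp
  | succ m ih =>
    have h0m : s 0 ≤ s m := chain_le s (m+1) hm 0 m (Nat.zero_le m) (Nat.le_succ m)
    have hmm : s m ≤ s (m+1) := (hm m (Nat.lt_succ_self m)).le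
    rw [split_int f h0m hmm (intOn_pieces f s (m+1) hm hf),
      ih (fun a ha => hm a (ha.trans (Nat.lt_succ_self m)))
        (fun a ha => hf a (ha.trans (Nat.lt_succ_self m))),
      Finset.sum_range_succ]

lemma step_piece (f : ℝ → ℝ) (s : ℕ → ℝ) (a : ℕ)
    (h : ∀ u ∈ Set.Ico (s a) (s (a+1)), f u = f (s a)) :
    IntegrableOn f (Set.Ico (s a) (s (a+1))) := by
  refine IntegrableOn.congr_fun (f := fun _ => f (s a)) ?_ (fun u hu => (h u hu).symm)
    measurableSet_Ico
  exact integrableOn_const measure_Ico_lt_top.ne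

lemma adm_piece_int (n : ℕ) (x : ℕ → ℝ) (hx : ∀ l < n, x l < x (l+1)) (R : ℝ → ℝ)
    (hR : IsStepOn R x n) (P : Finset ℝ) (i j : ℕ) (hin : i ≤ n) (t : ℕ → ℝ) (M : ℝ → ℝ)
    (hA : Adm x P i j t M) :
    ∀ a < j, IntegrableOn (fun z => |R z - M z|) (Set.Ico (t a) (t (a+1))) := by
  obtain ⟨h0, hj', hlt, hidx, hstep, -⟩ := hA
  intro a ha
  have hsub : Set.Ico (t a) (t (a+1)) ⊆ Set.Ico (x 0) (x n) := by
    intro z hz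
    refine ⟨?_, ?_⟩
    · calc x 0 = t 0 := h0.symm
        _ ≤ t a := chain_le t j hlt 0 a (Nat.zero_le a) ha.le
        _ ≤ z := hz.1
    · calc z < t (a+1) := hz.2
        _ ≤ t j := chain_le t j hlt (a+1) j ha le_rfl
        _ = x i := hj'
        _ ≤ x n := chain_le x n hx i n hin le_rfl
  have hbase : IntegrableOn (fun z => |R z - M (t a)|) (Set.Ico (x 0) (x n)) := by
    apply intOn_pieces _ x n hx
    intro l hl
    apply step_piece (fun z => |R z - M (t a)|) x l
    intro u hu
    simp only [hR l hl u hu]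
  exact (hbase.mono_set hsub).congr_fun
    (fun u hu => by simp only [hstep a ha u hu]) measurableSet_Ico

lemma adm_int (n : ℕ) (x : ℕ → ℝ) (hx : ∀ l < n, x l < x (l+1)) (R : ℝ → ℝ)
    (hR : IsStepOn R x n) (P : Finset ℝ) (i j : ℕ) (hin : i ≤ n) (t : ℕ → ℝ) (M : ℝ → ℝ)
    (hA : Adm x P i j t M) :
    IntegrableOn (fun z => |R z - M z|) (Set.Ico (x 0) (x i)) := by
  have h0 := hA.1
  have hj' := hA.2.1
  rw [← h0, ← hj']
  exact intOn_pieces _ t j hA.2.2.1 (adm_piece_int n x hx R hR P i j hin t M hA)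

lemma adm_cost_eq (n : ℕ) (x : ℕ → ℝ) (hx : ∀ l < n, x l < x (l+1)) (R : ℝ → ℝ)
    (hR : IsStepOn R x n) (P : Finset ℝ) (i j : ℕ) (hin : i ≤ n) (t : ℕ → ℝ) (M : ℝ → ℝ)
    (hA : Adm x P i j t M) (L : ℕ → ℕ) (hL : ∀ a ≤ j, t a = x (L a)) :
    compCost x R M i
      = ∑ a ∈ Finset.range j, ∫ z in Set.Ico (x (L a)) (x (L (a+1))), |R z - M (t a)| := by
  have hstep := hA.2.2.2.2.1
  unfold compCost
  rw [← hA.1, ← hA.2.1, sum_pieces _ t j hA.2.2.1 (adm_piece_int n x hx R hR P i j hin t M hA)]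
  refine Finset.sum_congr rfl (fun a ha => ?_)
  rw [Finset.mem_range] at ha
  rw [← hL a ha.le, ← hL (a+1) ha]
  exact setIntegral_congr_fun measurableSet_Ico (fun u hu => by simp only [hstep a ha u hu])

theorem stmt_13 (n : ℕ) (x : ℕ → ℝ) (hx : ∀ i < n, x i < x (i+1))
    (P : Finset ℝ) (hP : P.Nonempty) (R : ℝ → ℝ)
    (hR : IsStepOn R x n) (hRP : ∀ l < n, R (x l) ∈ P)
    (i j : ℕ) (hj : 2 ≤ j) (hji : j ≤ i) (hin : i ≤ n)
    (p : ℝ) (hp : p ∈ P) :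
    ∃ t M, Adm x P i j t M ∧ M (t (j-1)) = p ∧
      (∀ t' M', Adm x P i j t' M' → M' (t' (j-1)) = p →
        compCost x R M i ≤ compCost x R M' i) ∧
      (∀ i' : ℕ, t (j-1) = x i' → i' ≤ i →
        ∀ t'' M'', Adm x P i' (j-1) t'' M'' →
          compCost x R M i' ≤ compCost x R M'' i') := by
  classical
  set D : Set ℝ :=
    {c | ∃ t M, Adm x P i j t M ∧ M (t (j-1)) = p ∧ c = compCost x R M i} with hDdef
  -- nonemptiness
  have hwitA : Adm x P i j (fun a => if a = j then x i else x a) (fun _ => p) := by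
    refine ⟨by simp [show (0:ℕ) ≠ j by omega], by simp, ?_, ?_, ?_, ?_⟩
    · intro a ha
      have h1 : a ≠ j := by omega
      simp only [if_neg h1]
      by_cases h2 : a + 1 = j
      · rw [if_pos h2]
        exact chain_lt x n hx a i (by omega) hin
      · rw [if_neg h2]
        exact hx a (by omega)
    · intro a ha
      by_cases h : a = j
      · exact ⟨i, le_rfl, by simp [h]⟩
      · exact ⟨a, by omega, by simp [h]⟩
    · intro a ha u hu; rfl
    · intro a ha; exact hp
  have hDne : D.Nonempty :=
    ⟨compCost x R (fun _ => p) i, _, _, hwitA, rfl, rfl⟩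
  -- finiteness
  have hDfin : D.Finite := by
    set G : ((Fin (j+1) → Fin (i+1)) × (Fin j → {y : ℝ // y ∈ P})) → ℝ :=
      fun q => ∑ a ∈ Finset.range j,
        if ha : a < j then
          ∫ z in Set.Ico (x (q.1 ⟨a, by omega⟩).val) (x (q.1 ⟨a+1, by omega⟩).val),
            |R z - (q.2 ⟨a, ha⟩ : ℝ)|
        else 0 with hGdef
    apply Set.Finite.subset (Set.finite_range G)
    rintro c ⟨t, M, hA, -, rfl⟩
    have hidx := hA.2.2.2.1
    choose L hLi hLx using hidx
    set L' : ℕ → ℕ := fun a => if h : a ≤ j then L a h else 0 with hL'def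
    have hL'1 : ∀ a ≤ j, L' a ≤ i := fun a ha => by simp only [hL'def, dif_pos ha]; exact hLi a ha
    have hL'2 : ∀ a ≤ j, t a = x (L' a) := fun a ha => by
      simp only [hL'def, dif_pos ha]; exact hLx a ha
    refine ⟨(fun a => ⟨L' a.val, Nat.lt_succ_of_le (hL'1 a.val (Nat.lt_succ_iff.mp a.isLt))⟩,
      fun a => ⟨M (t a.val), hA.2.2.2.2.2 a.val a.isLt⟩), ?_⟩
    rw [hGdef]
    simp only
    rw [adm_cost_eq n x hx R hR P i j hin t M hA L' hL'2]
    refine (Finset.sum_congr rfl (fun a ha => ?_)).symm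
    rw [Finset.mem_range] at ha
    rw [dif_pos ha]
  -- the minimizer
  have hmem : sInf D ∈ D := hDne.csInf_mem hDfin
  obtain ⟨t, M, hA, hlast, hcost⟩ := hmem
  refine ⟨t, M, hA, hlast, ?_, ?_⟩
  · intro t' M' hA' hlast'
    rw [← hcost]
    exact csInf_le hDfin.bddBelow ⟨t', M', hA', hlast', rfl⟩
  · intro i' hti' hi'le t'' M'' hA''
    have hj1 : j - 1 + 1 = j := by omega
    have hbi : x i' < x i := by
      rw [← hti', ← hA.2.1]
      have := hA.2.2.1 (j-1) (by omega)
      rwa [hj1] at this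
    have hx0b : x 0 ≤ x i' := by
      rw [← hti', ← hA.1]
      exact chain_le t j hA.2.2.1 0 (j-1) (Nat.zero_le _) (by omega)
    obtain ⟨g0, gj, glt, gidx, gstep, gvals⟩ := hA''
    set t3 : ℕ → ℝ := fun a => if a < j then t'' a else x i with ht3def
    set M3 : ℝ → ℝ := fun z => if z < x i' then M'' z else p with hM3def
    have ht3a : ∀ a < j, t3 a = t'' a := fun a ha => by simp [ht3def, ha]
    have ht3j : t3 j = x i := by simp [ht3def]
    have hg_le : ∀ a ≤ j - 1, t'' a ≤ x i' := fun a ha => by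
      rw [← gj]; exact chain_le t'' (j-1) glt a (j-1) ha le_rfl
    have hA3 : Adm x P i j t3 M3 := by
      refine ⟨by rw [ht3a 0 (by omega), g0], ht3j, ?_, ?_, ?_, ?_⟩
      · intro a ha
        by_cases h : a + 1 < j
        · rw [ht3a a ha, ht3a (a+1) h]; exact glt a (by omega)
        · have ha1 : a = j - 1 := by omega
          rw [ht3a a ha, show a + 1 = j by omega, ht3j, ha1, gj]
          exact hbi
      · intro a haj
        by_cases h : a < j
        · obtain ⟨l, hl, he⟩ := gidx a (by omega)
          exact ⟨l, hl.trans hi'le, by rw [ht3a a h, he]⟩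
        · exact ⟨i, le_rfl, by rw [show a = j by omega, ht3j]⟩
      · intro a ha u hu
        by_cases h : a + 1 < j
        · have hu' : u ∈ Set.Ico (t'' a) (t'' (a+1)) := by
            rwa [ht3a a ha, ht3a (a+1) h] at hu
          have hux : u < x i' := lt_of_lt_of_le hu'.2 (hg_le (a+1) (by omega))
          have htx : t'' a < x i' := lt_of_le_of_lt hu'.1 hux
          rw [ht3a a ha, hM3def]
          simp only [if_pos hux, if_pos htx]
          exact gstep a (by omega) u hu'
        · have ha1 : a = j - 1 := by omega
          have hu' : u ∈ Set.Ico (x i') (x i) := by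
            rw [ht3a a ha, ha1, gj, hj1, ht3j] at hu
            exact hu
          rw [ht3a a ha, ha1, gj, hM3def]
          simp only [if_neg (not_lt.mpr hu'.1), if_neg (lt_irrefl (x i'))]
      · intro a ha
        by_cases h : a + 1 < j
        · have htx : t'' a < x i' :=
            lt_of_lt_of_le (glt a (by omega)) (hg_le (a+1) (by omega))
          rw [ht3a a ha, hM3def]
          simp only [if_pos htx]
          exact gvals a (by omega)
        · have ha1 : a = j - 1 := by omega
          rw [ht3a a ha, ha1, gj, hM3def]
          simp only [if_neg (lt_irrefl (x i'))]
          exact hp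
    have hlast3 : M3 (t3 (j-1)) = p := by
      rw [ht3a (j-1) (by omega), gj, hM3def]
      simp only [if_neg (lt_irrefl (x i'))]
    have hint : IntegrableOn (fun z => |R z - M z|) (Set.Ico (x 0) (x i)) :=
      adm_int n x hx R hR P i j hin t M hA
    have hint3 : IntegrableOn (fun z => |R z - M3 z|) (Set.Ico (x 0) (x i)) :=
      adm_int n x hx R hR P i j hin t3 M3 hA3
    have hM_tail : ∀ z ∈ Set.Ico (x i') (x i), M z = p := by
      intro z hz
      have h1 : z ∈ Set.Ico (t (j-1)) (t (j-1+1)) := by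
        rw [hti', hj1, hA.2.1]; exact hz
      rw [hA.2.2.2.2.1 (j-1) (by omega) z h1, hlast]
    have hd1 : compCost x R M i
        = compCost x R M i' + ∫ z in Set.Ico (x i') (x i), |R z - p| := by
      unfold compCost
      rw [split_int _ hx0b hbi.le hint]
      congr 1
      exact setIntegral_congr_fun measurableSet_Ico (fun z hz => by rw [hM_tail z hz])
    have hd3 : compCost x R M3 i
        = compCost x R M'' i' + ∫ z in Set.Ico (x i') (x i), |R z - p| := by
      unfold compCost
      rw [split_int _ hx0b hbi.le hint3]
      congr 1
      · exact setIntegral_congr_fun measurableSet_Ico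
          (fun z hz => by rw [hM3def]; simp only [if_pos hz.2])
      · exact setIntegral_congr_fun measurableSet_Ico
          (fun z hz => by rw [hM3def]; simp only [if_neg (not_lt.mpr hz.1)])
    have hmin3 : compCost x R M i ≤ compCost x R M3 i := by
      rw [← hcost]
      exact csInf_le hDfin.bddBelow ⟨t3, M3, hA3, hlast3, rfl⟩
    linarith
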